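/- Discrete zero curvature representation for equation (dRTL+ dual): with L_k = [[−λ+x_k, λ²+λαe^{p_k}−(x_k−αe^{p_k})x_k−e^{p_k}],[1, −λ−x_k+αe^{p_k}]] and V_k = I + h·[[−λ+x_k, λ²+λ(x_k−x̃_{k-1}+αe^{p̃_{k-1}})−(x̃_{k-1}−αe^{p̃_{k-1}})x_k],[1, −λ−x̃_{k-1}+αe^{p̃_{k-1}}]], the matrix equation L̃_k V_k = V_{k+1} L_k (as an identity of 2×2 matrices, polynomial in λ) holds whenever the variables satisfy the Lagrangian equations of motion (the two momentum relations h e^{p_k} = (x_k−x̲_k)(1+h(x̲_{k+1}−x_k))/(1+α(x̲_{k+1}−x_k)) and h e^{p_k} = (x̃_k−x_k)·((1+α(x_k−x_{k-1}))/(1+α(x_{k+1}−x_k)))·((1+h(x_k−x̃_{k-1}))/(1+α(x_k−x̃_{k-1}))) at all relevant sites). -/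

import Mathlib

set_option maxHeartbeats 1600000


/-- The transition matrix `L_k` of the zero curvature representation of
equation (dRTL+ dual); `P = e^{p_k}`. -/
def dRTLdual_L (α lam x P : ℂ) : Matrix (Fin 2) (Fin 2) ℂ :=
  !![-lam + x, lam ^ 2 + lam * α * P - (x - α * P) * x - P;
     1, -lam - x + α * P]

/-- The transition matrix `V_k` of the zero curvature representation of
equation (dRTL+ dual); `x = x_k`, `y = x̃_{k-1}`, `P = e^{p̃_{k-1}}`. -/
def dRTLdual_V (α h lam x y P : ℂ) : Matrix (Fin 2) (Fin 2) ℂ :=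
  1 + h • !![-lam + x, lam ^ 2 + lam * (x - y + α * P) - (y - α * P) * x;
             1, -lam - y + α * P]

/-- Discrete zero curvature representation for equation (dRTL+ dual): the
matrix identity `L̃_k V_k = V_{k+1} L_k` holds (as an identity of 2×2 matrices,
polynomially in `λ`) whenever the variables satisfy the Lagrangian equations of
motion. Here `xm = x_{k-1}`, `xk = x_k`, `xp = x_{k+1}`, `ym = x̃_{k-1}`,
`yk = x̃_k`, `Pk = e^{p_k}`, `Qk = e^{p̃_k}`, `Qm = e^{p̃_{k-1}}`. -/
theorem dRTLdual_discrete_zero_curvature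
    (α h xm xk xp ym yk Pk Qk Qm : ℂ)
    (hh : h ≠ 0)
    (e1 : 1 + α * (xk - ym) ≠ 0) (e2 : 1 + α * (xp - yk) ≠ 0)
    (e3 : 1 + α * (xk - xm) ≠ 0) (e4 : 1 + α * (xp - xk) ≠ 0)
    -- (p1) at site k−1, time t+h
    (hQM : h * Qm = (ym - xm) * (1 + h * (xk - ym)) / (1 + α * (xk - ym)))
    -- (p1) at site k, time t+h
    (hQK : h * Qk = (yk - xk) * (1 + h * (xp - yk)) / (1 + α * (xp - yk)))
    -- (p2) at site k, time t
    (hPK : h * Pk = (yk - xk) * ((1 + α * (xk - xm)) / (1 + α * (xp - xk))) *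
                    ((1 + h * (xk - ym)) / (1 + α * (xk - ym)))) :
    ∀ lam : ℂ,
      dRTLdual_L α lam yk Qk * dRTLdual_V α h lam xk ym Qm =
      dRTLdual_V α h lam xp yk Qk * dRTLdual_L α lam xk Pk := by
  have rA : h * Qm * (1 + α * (xk - ym)) = (ym - xm) * (1 + h * (xk - ym)) := by
    rw [eq_div_iff e1] at hQM; linear_combination hQM
  have rB : h * Qk * (1 + α * (xp - yk)) = (yk - xk) * (1 + h * (xp - yk)) := by
    rw [eq_div_iff e2] at hQK; linear_combination hQK
  have rC : h * Pk * ((1 + α * (xp - xk)) * (1 + α * (xk - ym))) =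
      (yk - xk) * (1 + α * (xk - xm)) * (1 + h * (xk - ym)) := by
    field_simp at hPK; linear_combination hPK
  have hM : (h * ((1 + α * (xp - xk)) * (1 + α * (xk - ym)))) * (h * (1 + α * (xk - ym))) *
      (h * (1 + α * (xp - yk))) ≠ 0 :=
    mul_ne_zero (mul_ne_zero (mul_ne_zero hh (mul_ne_zero e4 e1)) (mul_ne_zero hh e1))
      (mul_ne_zero hh e2)
  intro lam
  ext i j
  fin_cases i <;> fin_cases j
  · simp only [dRTLdual_L, dRTLdual_V, Matrix.mul_apply, Fin.sum_univ_two,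
        Matrix.add_apply, Matrix.smul_apply, Matrix.one_apply, Matrix.cons_val_zero,
        Matrix.cons_val_one, Matrix.head_cons, Matrix.head_fin_const, Matrix.cons_val_fin_one,
        Fin.isValue, smul_eq_mul]
    norm_num
    apply mul_left_cancel₀ (mul_ne_zero hh e2)
    linear_combination ((-1:ℂ)*h + α*h*yk + (-1:ℂ)*α*h*xp) * rB
  · simp only [dRTLdual_L, dRTLdual_V, Matrix.mul_apply, Fin.sum_univ_two,
        Matrix.add_apply, Matrix.smul_apply, Matrix.one_apply, Matrix.cons_val_zero,
        Matrix.cons_val_one, Matrix.head_cons, Matrix.head_fin_const, Matrix.cons_val_fin_one,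
        Fin.isValue, smul_eq_mul]
    norm_num
    apply mul_left_cancel₀ hM
    linear_combination ((-1:ℂ)*α*h^3*Qk + α*h^3*yk*lam + (-1:ℂ)*α*h^3*yk^2 + (-1:ℂ)*α*h^3*xk*lam + α*h^3*xk*yk + α^2*h^3*lam*Qk + (2:ℂ)*α^2*h^3*yk*Qk + (-1:ℂ)*α^2*h^3*yk^2*lam + α^2*h^3*yk^3 + α^2*h^3*ym*Qk + (-1:ℂ)*α^2*h^3*ym*yk*lam + α^2*h^3*ym*yk^2 + (-2:ℂ)*α^2*h^3*xp*Qk + (2:ℂ)*α^2*h^3*xp*yk*lam + (-2:ℂ)*α^2*h^3*xp*yk^2 + α^2*h^3*xk*yk*lam + (-1:ℂ)*α^2*h^3*xk*yk^2 + α^2*h^3*xk*ym*lam + (-1:ℂ)*α^2*h^3*xk*ym*yk + (-2:ℂ)*α^2*h^3*xk*xp*lam + (2:ℂ)*α^2*h^3*xk*xp*yk + (-1:ℂ)*α^3*h^3*yk*lam*Qk + (-1:ℂ)*α^3*h^3*yk^2*Qk + (-1:ℂ)*α^3*h^3*ym*lam*Qk + (-2:ℂ)*α^3*h^3*ym*yk*Qk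 + α^3*h^3*ym*yk^2*lam + (-1:ℂ)*α^3*h^3*ym*yk^3 + (2:ℂ)*α^3*h^3*xp*lam*Qk + (3:ℂ)*α^3*h^3*xp*yk*Qk + (-1:ℂ)*α^3*h^3*xp*yk^2*lam + α^3*h^3*xp*yk^3 + (2:ℂ)*α^3*h^3*xp*ym*Qk + (-2:ℂ)*α^3*h^3*xp*ym*yk*lam + (2:ℂ)*α^3*h^3*xp*ym*yk^2 + (-1:ℂ)*α^3*h^3*xp^2*Qk + α^3*h^3*xp^2*yk*lam + (-1:ℂ)*α^3*h^3*xp^2*yk^2 + (-1:ℂ)*α^3*h^3*xk*ym*Qk + (-1:ℂ)*α^3*h^3*xk*xp*Qk + (2:ℂ)*α^3*h^3*xk*xp*yk*lam + (-2:ℂ)*α^3*h^3*xk*xp*yk^2 + (2:ℂ)*α^3*h^3*xk*xp*ym*lam + (-2:ℂ)*α^3*h^3*xk*xp*ym*yk + (-1:ℂ)*α^3*h^3*xk*xp^2*lam + α^3*h^3*xk*xp^2*yk + α^3*h^3*xk^2*Qk + (-1:ℂ)*α^3*h^3*xk^2*yk*lam + α^3*h^3*xk^2*yk^2 + (-1:ℂ)*α^3*h^3*xk^2*ym*lam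 + α^3*h^3*xk^2*ym*yk + (-1:ℂ)*α^3*h^3*xk^2*xp*lam + α^3*h^3*xk^2*xp*yk + α^3*h^3*xk^3*lam + (-1:ℂ)*α^3*h^3*xk^3*yk + α^4*h^3*ym*yk*lam*Qk + α^4*h^3*ym*yk^2*Qk + (-1:ℂ)*α^4*h^3*xp*yk*lam*Qk + (-1:ℂ)*α^4*h^3*xp*yk^2*Qk + (-2:ℂ)*α^4*h^3*xp*ym*lam*Qk + (-3:ℂ)*α^4*h^3*xp*ym*yk*Qk + α^4*h^3*xp*ym*yk^2*lam + (-1:ℂ)*α^4*h^3*xp*ym*yk^3 + α^4*h^3*xp^2*lam*Qk + α^4*h^3*xp^2*yk*Qk + α^4*h^3*xp^2*ym*Qk + (-1:ℂ)*α^4*h^3*xp^2*ym*yk*lam + α^4*h^3*xp^2*ym*yk^2 + α^4*h^3*xk*ym*lam*Qk + (2:ℂ)*α^4*h^3*xk*ym*yk*Qk + (-1:ℂ)*α^4*h^3*xk*ym*yk^2*lam + α^4*h^3*xk*ym*yk^3 + α^4*h^3*xk*xp*lam*Qk + (2:ℂ)*α^4*h^3*xk*xp*yk*Qk + (-1:ℂ)*α^4*h^3*xk*xp*yk^2*lam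 + α^4*h^3*xk*xp*yk^3 + (-1:ℂ)*α^4*h^3*xk*xp*ym*Qk + (-1:ℂ)*α^4*h^3*xk*xp^2*Qk + α^4*h^3*xk*xp^2*yk*lam + (-1:ℂ)*α^4*h^3*xk*xp^2*yk^2 + α^4*h^3*xk*xp^2*ym*lam + (-1:ℂ)*α^4*h^3*xk*xp^2*ym*yk + (-1:ℂ)*α^4*h^3*xk^2*lam*Qk + (-2:ℂ)*α^4*h^3*xk^2*yk*Qk + α^4*h^3*xk^2*yk^2*lam + (-1:ℂ)*α^4*h^3*xk^2*yk^3 + α^4*h^3*xk^2*ym*yk*lam + (-1:ℂ)*α^4*h^3*xk^2*ym*yk^2 + α^4*h^3*xk^2*xp*Qk + (-1:ℂ)*α^4*h^3*xk^2*xp*ym*lam + α^4*h^3*xk^2*xp*ym*yk + (-1:ℂ)*α^4*h^3*xk^2*xp^2*lam + α^4*h^3*xk^2*xp^2*yk + (-1:ℂ)*α^4*h^3*xk^3*yk*lam + α^4*h^3*xk^3*yk^2 + α^4*h^3*xk^3*xp*lam + (-1:ℂ)*α^4*h^3*xk^3*xp*yk + α^5*h^3*xp*ym*yk*lam*Qk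 + α^5*h^3*xp*ym*yk^2*Qk + (-1:ℂ)*α^5*h^3*xp^2*ym*lam*Qk + (-1:ℂ)*α^5*h^3*xp^2*ym*yk*Qk + (-1:ℂ)*α^5*h^3*xk*ym*yk*lam*Qk + (-1:ℂ)*α^5*h^3*xk*ym*yk^2*Qk + (-1:ℂ)*α^5*h^3*xk*xp*yk*lam*Qk + (-1:ℂ)*α^5*h^3*xk*xp*yk^2*Qk + α^5*h^3*xk*xp*ym*lam*Qk + α^5*h^3*xk*xp*ym*yk*Qk + α^5*h^3*xk*xp^2*lam*Qk + α^5*h^3*xk*xp^2*yk*Qk + α^5*h^3*xk^2*yk*lam*Qk + α^5*h^3*xk^2*yk^2*Qk + (-1:ℂ)*α^5*h^3*xk^2*xp*lam*Qk + (-1:ℂ)*α^5*h^3*xk^2*xp*yk*Qk) * rA + ((-1:ℂ)*h^2 + h^3*lam + h^3*ym + α*h^2*lam + α*h^2*yk + α*h^2*ym + (-1:ℂ)*α*h^2*xp + (-1:ℂ)*α*h^2*xk + α*h^2*xm + (-1:ℂ)*α*h^3*yk*lam + (-3:ℂ)*α*h^3*ym*lam + (-1:ℂ)*α*h^3*ym*yk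 + (-1:ℂ)*α*h^3*ym^2 + (2:ℂ)*α*h^3*xp*lam + α*h^3*xp*ym + (2:ℂ)*α*h^3*xk*lam + α*h^3*xk*xp + (-1:ℂ)*α*h^3*xm*ym + α*h^3*xm*xk + (-1:ℂ)*α^2*h^2*yk*lam + (-1:ℂ)*α^2*h^2*ym*lam + (-1:ℂ)*α^2*h^2*ym*yk + α^2*h^2*xp*lam + α^2*h^2*xp*ym + (2:ℂ)*α^2*h^2*xk*lam + α^2*h^2*xk*yk + (-1:ℂ)*α^2*h^2*xk*xp + α^2*h^2*xk^2 + (-1:ℂ)*α^2*h^2*xm*lam + (-1:ℂ)*α^2*h^2*xm*yk + (-1:ℂ)*α^2*h^2*xm*ym + α^2*h^2*xm*xp + (3:ℂ)*α^2*h^3*ym*yk*lam + (2:ℂ)*α^2*h^3*ym^2*lam + α^2*h^3*ym^2*yk + (-1:ℂ)*α^2*h^3*xp*yk*lam + (-5:ℂ)*α^2*h^3*xp*ym*lam + (-1:ℂ)*α^2*h^3*xp*ym^2 + α^2*h^3*xp^2*lam + (-2:ℂ)*α^2*h^3*xk*yk*lam + (-3:ℂ)*α^2*h^3*xk*ym*lam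 + α^2*h^3*xk*ym^2 + (4:ℂ)*α^2*h^3*xk*xp*lam + (-1:ℂ)*α^2*h^3*xk*xp*yk + (-2:ℂ)*α^2*h^3*xk*xp*ym + α^2*h^3*xk*xp^2 + α^2*h^3*xk^2*lam + (-1:ℂ)*α^2*h^3*xk^2*ym + (2:ℂ)*α^2*h^3*xk^2*xp + α^2*h^3*xm*ym*lam + α^2*h^3*xm*ym*yk + α^2*h^3*xm*ym^2 + (-1:ℂ)*α^2*h^3*xm*xp*ym + (-1:ℂ)*α^2*h^3*xm*xk*lam + (-1:ℂ)*α^2*h^3*xm*xk*yk + (-1:ℂ)*α^2*h^3*xm*xk*ym + α^2*h^3*xm*xk*xp + α^3*h^2*ym*yk*lam + (-1:ℂ)*α^3*h^2*xp*ym*lam + (-2:ℂ)*α^3*h^2*xk*yk*lam + (-1:ℂ)*α^3*h^2*xk*ym*lam + (2:ℂ)*α^3*h^2*xk*xp*lam + α^3*h^2*xk^2*lam + (-1:ℂ)*α^3*h^2*xk^2*yk + (-1:ℂ)*α^3*h^2*xk^2*ym + α^3*h^2*xk^2*xp + α^3*h^2*xk^3 + α^3*h^2*xm*yk*lam + α^3*h^2*xm*ym*lam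 + α^3*h^2*xm*ym*yk + (-1:ℂ)*α^3*h^2*xm*xp*lam + (-1:ℂ)*α^3*h^2*xm*xp*ym + (-1:ℂ)*α^3*h^2*xm*xk*lam + α^3*h^2*xm*xk*ym + (-1:ℂ)*α^3*h^2*xm*xk^2 + (-2:ℂ)*α^3*h^3*ym^2*yk*lam + (2:ℂ)*α^3*h^3*xp*ym*yk*lam + (3:ℂ)*α^3*h^3*xp*ym^2*lam + (-2:ℂ)*α^3*h^3*xp^2*ym*lam + (3:ℂ)*α^3*h^3*xk*ym*yk*lam + (-1:ℂ)*α^3*h^3*xk*ym^2*yk + (-2:ℂ)*α^3*h^3*xk*xp*yk*lam + (-5:ℂ)*α^3*h^3*xk*xp*ym*lam + (2:ℂ)*α^3*h^3*xk*xp*ym*yk + (2:ℂ)*α^3*h^3*xk*xp*ym^2 + (2:ℂ)*α^3*h^3*xk*xp^2*lam + (-2:ℂ)*α^3*h^3*xk*xp^2*ym + (-1:ℂ)*α^3*h^3*xk^2*yk*lam + α^3*h^3*xk^2*ym*yk + (2:ℂ)*α^3*h^3*xk^2*xp*lam + (-2:ℂ)*α^3*h^3*xk^2*xp*yk + (-3:ℂ)*α^3*h^3*xk^2*xp*ym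 + (2:ℂ)*α^3*h^3*xk^2*xp^2 + α^3*h^3*xk^3*xp + (-1:ℂ)*α^3*h^3*xm*ym*yk*lam + (-1:ℂ)*α^3*h^3*xm*ym^2*lam + (-1:ℂ)*α^3*h^3*xm*ym^2*yk + α^3*h^3*xm*xp*ym*lam + α^3*h^3*xm*xp*ym^2 + α^3*h^3*xm*xk*yk*lam + (2:ℂ)*α^3*h^3*xm*xk*ym*lam + α^3*h^3*xm*xk*ym*yk + (-1:ℂ)*α^3*h^3*xm*xk*ym^2 + (-1:ℂ)*α^3*h^3*xm*xk*xp*lam + (-1:ℂ)*α^3*h^3*xm*xk*xp*ym + (-1:ℂ)*α^3*h^3*xm*xk^2*lam + (2:ℂ)*α^3*h^3*xm*xk^2*ym + (-1:ℂ)*α^3*h^3*xm*xk^3 + α^4*h^2*xk*ym*yk*lam + (-1:ℂ)*α^4*h^2*xk*xp*ym*lam + (-1:ℂ)*α^4*h^2*xk^2*yk*lam + α^4*h^2*xk^2*ym*yk + α^4*h^2*xk^2*xp*lam + (-1:ℂ)*α^4*h^2*xk^2*xp*ym + (-1:ℂ)*α^4*h^2*xk^3*yk + α^4*h^2*xk^3*xp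 + (-1:ℂ)*α^4*h^2*xm*ym*yk*lam + α^4*h^2*xm*xp*ym*lam + α^4*h^2*xm*xk*yk*lam + (-1:ℂ)*α^4*h^2*xm*xk*ym*yk + (-1:ℂ)*α^4*h^2*xm*xk*xp*lam + α^4*h^2*xm*xk*xp*ym + α^4*h^2*xm*xk^2*yk + (-1:ℂ)*α^4*h^2*xm*xk^2*xp + (-1:ℂ)*α^4*h^3*xp*ym^2*yk*lam + α^4*h^3*xp^2*ym^2*lam + (2:ℂ)*α^4*h^3*xk*xp*ym*yk*lam + (-1:ℂ)*α^4*h^3*xk*xp*ym^2*yk + (-2:ℂ)*α^4*h^3*xk*xp^2*ym*lam + α^4*h^3*xk*xp^2*ym^2 + (-1:ℂ)*α^4*h^3*xk^2*xp*yk*lam + (2:ℂ)*α^4*h^3*xk^2*xp*ym*yk + α^4*h^3*xk^2*xp^2*lam + (-2:ℂ)*α^4*h^3*xk^2*xp^2*ym + (-1:ℂ)*α^4*h^3*xk^3*xp*yk + α^4*h^3*xk^3*xp^2 + α^4*h^3*xm*ym^2*yk*lam + (-1:ℂ)*α^4*h^3*xm*xp*ym^2*lam + (-2:ℂ)*α^4*h^3*xm*xk*ym*yk*lam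 + α^4*h^3*xm*xk*ym^2*yk + (2:ℂ)*α^4*h^3*xm*xk*xp*ym*lam + (-1:ℂ)*α^4*h^3*xm*xk*xp*ym^2 + α^4*h^3*xm*xk^2*yk*lam + (-2:ℂ)*α^4*h^3*xm*xk^2*ym*yk + (-1:ℂ)*α^4*h^3*xm*xk^2*xp*lam + (2:ℂ)*α^4*h^3*xm*xk^2*xp*ym + α^4*h^3*xm*xk^3*yk + (-1:ℂ)*α^4*h^3*xm*xk^3*xp) * rB + (h^2 + (-1:ℂ)*h^3*lam + h^3*xp + (-1:ℂ)*α*h^2*lam + (-1:ℂ)*α*h^2*yk + (-1:ℂ)*α*h^2*ym + α*h^2*xp + (2:ℂ)*α*h^3*yk*lam + α*h^3*ym*lam + (-3:ℂ)*α*h^3*xp*lam + (-1:ℂ)*α*h^3*xp*ym + α*h^3*xp^2 + α^2*h^2*yk*lam + α^2*h^2*ym*lam + α^2*h^2*ym*yk + (-1:ℂ)*α^2*h^2*xp*lam + (-1:ℂ)*α^2*h^2*xp*ym + (-1:ℂ)*α^2*h^2*xk*lam + α^2*h^2*xk*ym + (-1:ℂ)*α^2*h^2*xk^2 + (-1:ℂ)*α^2*h^3*lam*Qk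 + (-1:ℂ)*α^2*h^3*yk^2*lam + (-2:ℂ)*α^2*h^3*ym*yk*lam + (-1:ℂ)*α^2*h^3*xp*Qk + (3:ℂ)*α^2*h^3*xp*yk*lam + (-1:ℂ)*α^2*h^3*xp*yk^2 + (3:ℂ)*α^2*h^3*xp*ym*lam + (-2:ℂ)*α^2*h^3*xp^2*lam + α^2*h^3*xp^2*yk + (-1:ℂ)*α^2*h^3*xp^2*ym + α^2*h^3*xk*yk*lam + (-1:ℂ)*α^2*h^3*xk*ym*lam + (-2:ℂ)*α^2*h^3*xk*xp*lam + α^2*h^3*xk*xp*yk + α^2*h^3*xk*xp*ym + α^2*h^3*xk^2*lam + (-1:ℂ)*α^2*h^3*xk^2*xp + (-1:ℂ)*α^3*h^2*ym*yk*lam + α^3*h^2*xp*ym*lam + α^3*h^2*xk*yk*lam + (-1:ℂ)*α^3*h^2*xk*ym*yk + (-1:ℂ)*α^3*h^2*xk*xp*lam + α^3*h^2*xk*xp*ym + α^3*h^2*xk^2*yk + (-1:ℂ)*α^3*h^2*xk^2*xp + α^3*h^3*yk*lam*Qk + α^3*h^3*ym*lam*Qk + α^3*h^3*ym*yk^2*lam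 + (-1:ℂ)*α^3*h^3*xp*lam*Qk + α^3*h^3*xp*yk*Qk + α^3*h^3*xp*ym*Qk + (-3:ℂ)*α^3*h^3*xp*ym*yk*lam + α^3*h^3*xp*ym*yk^2 + (-1:ℂ)*α^3*h^3*xp^2*Qk + (2:ℂ)*α^3*h^3*xp^2*ym*lam + (-1:ℂ)*α^3*h^3*xp^2*ym*yk + (-1:ℂ)*α^3*h^3*xk*lam*Qk + (-1:ℂ)*α^3*h^3*xk*yk^2*lam + α^3*h^3*xk*ym*yk*lam + (-1:ℂ)*α^3*h^3*xk*xp*Qk + (3:ℂ)*α^3*h^3*xk*xp*yk*lam + (-1:ℂ)*α^3*h^3*xk*xp*yk^2 + (-1:ℂ)*α^3*h^3*xk*xp*ym*lam + (-1:ℂ)*α^3*h^3*xk*xp*ym*yk + (-2:ℂ)*α^3*h^3*xk*xp^2*lam + α^3*h^3*xk*xp^2*yk + α^3*h^3*xk*xp^2*ym + (-1:ℂ)*α^3*h^3*xk^2*yk*lam + α^3*h^3*xk^2*xp*lam + α^3*h^3*xk^2*xp*yk + (-1:ℂ)*α^3*h^3*xk^2*xp^2 + (-1:ℂ)*α^4*h^3*ym*yk*lam*Qk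 + α^4*h^3*xp*ym*lam*Qk + (-1:ℂ)*α^4*h^3*xp*ym*yk*Qk + α^4*h^3*xp^2*ym*Qk + α^4*h^3*xk*yk*lam*Qk + (-1:ℂ)*α^4*h^3*xk*xp*lam*Qk + α^4*h^3*xk*xp*yk*Qk + (-1:ℂ)*α^4*h^3*xk*xp^2*Qk) * rC
  · simp only [dRTLdual_L, dRTLdual_V, Matrix.mul_apply, Fin.sum_univ_two,
        Matrix.add_apply, Matrix.smul_apply, Matrix.one_apply, Matrix.cons_val_zero,
        Matrix.cons_val_one, Matrix.head_cons, Matrix.head_fin_const, Matrix.cons_val_fin_one,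
        Fin.isValue, smul_eq_mul]
    norm_num
    ring
  · simp only [dRTLdual_L, dRTLdual_V, Matrix.mul_apply, Fin.sum_univ_two,
        Matrix.add_apply, Matrix.smul_apply, Matrix.one_apply, Matrix.cons_val_zero,
        Matrix.cons_val_one, Matrix.head_cons, Matrix.head_fin_const, Matrix.cons_val_fin_one,
        Fin.isValue, smul_eq_mul]
    norm_num
    apply mul_left_cancel₀ hM
    linear_combination ((-1:ℂ)*α*h^3*yk + α*h^3*xk + α^2*h^3*Qk + α^2*h^3*yk^2 + α^2*h^3*ym*yk + (-2:ℂ)*α^2*h^3*xp*yk + (-1:ℂ)*α^2*h^3*xk*yk + (-1:ℂ)*α^2*h^3*xk*ym + (2:ℂ)*α^2*h^3*xk*xp + (-1:ℂ)*α^3*h^3*yk*Qk + (-1:ℂ)*α^3*h^3*ym*Qk + (-1:ℂ)*α^3*h^3*ym*yk^2 + (2:ℂ)*α^3*h^3*xp*Qk + α^3*h^3*xp*yk^2 + (2:ℂ)*α^3*h^3*xp*ym*yk + (-1:ℂ)*α^3*h^3*xp^2*yk + (-2:ℂ)*α^3*h^3*xk*xp*yk + (-2:ℂ)*α^3*h^3*xk*xp*ym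 + α^3*h^3*xk*xp^2 + α^3*h^3*xk^2*yk + α^3*h^3*xk^2*ym + α^3*h^3*xk^2*xp + (-1:ℂ)*α^3*h^3*xk^3 + α^4*h^3*ym*yk*Qk + (-1:ℂ)*α^4*h^3*xp*yk*Qk + (-2:ℂ)*α^4*h^3*xp*ym*Qk + (-1:ℂ)*α^4*h^3*xp*ym*yk^2 + α^4*h^3*xp^2*Qk + α^4*h^3*xp^2*ym*yk + α^4*h^3*xk*ym*Qk + α^4*h^3*xk*ym*yk^2 + α^4*h^3*xk*xp*Qk + α^4*h^3*xk*xp*yk^2 + (-1:ℂ)*α^4*h^3*xk*xp^2*yk + (-1:ℂ)*α^4*h^3*xk*xp^2*ym + (-1:ℂ)*α^4*h^3*xk^2*Qk + (-1:ℂ)*α^4*h^3*xk^2*yk^2 + (-1:ℂ)*α^4*h^3*xk^2*ym*yk + α^4*h^3*xk^2*xp*ym + α^4*h^3*xk^2*xp^2 + α^4*h^3*xk^3*yk + (-1:ℂ)*α^4*h^3*xk^3*xp + α^5*h^3*xp*ym*yk*Qk + (-1:ℂ)*α^5*h^3*xp^2*ym*Qk + (-1:ℂ)*α^5*h^3*xk*ym*yk*Qk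 + (-1:ℂ)*α^5*h^3*xk*xp*yk*Qk + α^5*h^3*xk*xp*ym*Qk + α^5*h^3*xk*xp^2*Qk + α^5*h^3*xk^2*yk*Qk + (-1:ℂ)*α^5*h^3*xk^2*xp*Qk) * rA + (α*h^2 + (-1:ℂ)*α*h^3*ym + α*h^3*xk + (-1:ℂ)*α^2*h^2*yk + (-1:ℂ)*α^2*h^2*ym + α^2*h^2*xp + (2:ℂ)*α^2*h^2*xk + (-1:ℂ)*α^2*h^2*xm + α^2*h^3*ym*yk + α^2*h^3*ym^2 + (-1:ℂ)*α^2*h^3*xp*ym + (-1:ℂ)*α^2*h^3*xk*yk + (-3:ℂ)*α^2*h^3*xk*ym + α^2*h^3*xk*xp + (2:ℂ)*α^2*h^3*xk^2 + α^2*h^3*xm*ym + (-1:ℂ)*α^2*h^3*xm*xk + α^3*h^2*ym*yk + (-1:ℂ)*α^3*h^2*xp*ym + (-2:ℂ)*α^3*h^2*xk*yk + (-1:ℂ)*α^3*h^2*xk*ym + (2:ℂ)*α^3*h^2*xk*xp + α^3*h^2*xk^2 + α^3*h^2*xm*yk + α^3*h^2*xm*ym + (-1:ℂ)*α^3*h^2*xm*xp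 + (-1:ℂ)*α^3*h^2*xm*xk + (-1:ℂ)*α^3*h^3*ym^2*yk + α^3*h^3*xp*ym^2 + (3:ℂ)*α^3*h^3*xk*ym*yk + α^3*h^3*xk*ym^2 + (-3:ℂ)*α^3*h^3*xk*xp*ym + (-2:ℂ)*α^3*h^3*xk^2*yk + (-2:ℂ)*α^3*h^3*xk^2*ym + (2:ℂ)*α^3*h^3*xk^2*xp + α^3*h^3*xk^3 + (-1:ℂ)*α^3*h^3*xm*ym*yk + (-1:ℂ)*α^3*h^3*xm*ym^2 + α^3*h^3*xm*xp*ym + α^3*h^3*xm*xk*yk + (2:ℂ)*α^3*h^3*xm*xk*ym + (-1:ℂ)*α^3*h^3*xm*xk*xp + (-1:ℂ)*α^3*h^3*xm*xk^2 + α^4*h^2*xk*ym*yk + (-1:ℂ)*α^4*h^2*xk*xp*ym + (-1:ℂ)*α^4*h^2*xk^2*yk + α^4*h^2*xk^2*xp + (-1:ℂ)*α^4*h^2*xm*ym*yk + α^4*h^2*xm*xp*ym + α^4*h^2*xm*xk*yk + (-1:ℂ)*α^4*h^2*xm*xk*xp + (-1:ℂ)*α^4*h^3*xk*ym^2*yk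 + α^4*h^3*xk*xp*ym^2 + (2:ℂ)*α^4*h^3*xk^2*ym*yk + (-2:ℂ)*α^4*h^3*xk^2*xp*ym + (-1:ℂ)*α^4*h^3*xk^3*yk + α^4*h^3*xk^3*xp + α^4*h^3*xm*ym^2*yk + (-1:ℂ)*α^4*h^3*xm*xp*ym^2 + (-2:ℂ)*α^4*h^3*xm*xk*ym*yk + (2:ℂ)*α^4*h^3*xm*xk*xp*ym + α^4*h^3*xm*xk^2*yk + (-1:ℂ)*α^4*h^3*xm*xk^2*xp) * rB + (h^3 + (-1:ℂ)*α*h^2 + (-1:ℂ)*α*h^3*ym + α*h^3*xp + α^2*h^2*yk + α^2*h^2*ym + (-1:ℂ)*α^2*h^2*xp + (-1:ℂ)*α^2*h^2*xk + (-1:ℂ)*α^2*h^3*Qk + (-1:ℂ)*α^2*h^3*yk^2 + α^2*h^3*xp*yk + (-1:ℂ)*α^2*h^3*xp*ym + α^2*h^3*xk*yk + α^2*h^3*xk*ym + (-1:ℂ)*α^2*h^3*xk^2 + (-1:ℂ)*α^3*h^2*ym*yk + α^3*h^2*xp*ym + α^3*h^2*xk*yk + (-1:ℂ)*α^3*h^2*xk*xp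 + α^3*h^3*yk*Qk + α^3*h^3*ym*Qk + α^3*h^3*ym*yk^2 + (-1:ℂ)*α^3*h^3*xp*Qk + (-1:ℂ)*α^3*h^3*xp*ym*yk + (-1:ℂ)*α^3*h^3*xk*Qk + (-1:ℂ)*α^3*h^3*xk*yk^2 + (-1:ℂ)*α^3*h^3*xk*ym*yk + α^3*h^3*xk*xp*yk + α^3*h^3*xk*xp*ym + α^3*h^3*xk^2*yk + (-1:ℂ)*α^3*h^3*xk^2*xp + (-1:ℂ)*α^4*h^3*ym*yk*Qk + α^4*h^3*xp*ym*Qk + α^4*h^3*xk*yk*Qk + (-1:ℂ)*α^4*h^3*xk*xp*Qk) * rC
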